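/- arXiv:1806.08253 — 6 statements merged into one kernel-verified Lean document; each statement's English description precedes it below -/
import Mathlib

section
/- Define q : ℕ → ℕ recursively by q₁ = 2 and q_{n+1} = (2^{n+1})^{2^{q_n}}. Then for every n ≥ 1 the tail of the series of reciprocals satisfies ∑_{k=n+1}^∞ 1/q_k < (2^n)^{−2^{q_n}}. -/
/-- With `q₁ = 2` and `q_{n+1} = (2^{n+1})^{2^{q_n}}`, the tail
of the series of reciprocals satisfies, for every `n ≥ 1`,
`∑_{k=n+1}^∞ 1/q_k < (2^n)^{−2^{q_n}}`. -/
theorem tower_power_tail_bound (q : ℕ → ℕ) (h1 : q 1 = 2)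
    (hrec : ∀ n : ℕ, 1 ≤ n → q (n + 1) = (2 ^ (n + 1)) ^ (2 ^ q n)) :
    ∀ n : ℕ, 1 ≤ n →
      (∑' k : ℕ, (1 : ℝ) / q (n + 1 + k)) < 1 / ((2 : ℝ) ^ n) ^ (2 ^ q n) := by
  -- q m ≥ 2 for m ≥ 1
  have hq2 : ∀ m : ℕ, 1 ≤ m → 2 ≤ q m := by
    intro m hm
    induction m with
    | zero => omega
    | succ k ih =>
      rcases Nat.eq_or_lt_of_le hm with h | h
      · have hk0 : k = 0 := by omega
        subst hk0; rw [h1]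
      · have hk : 1 ≤ k := by omega
        rw [hrec k hk]
        calc 2 ≤ 2 ^ (k + 1) := by
              have := Nat.one_lt_two_pow (n := k + 1) (by omega)
              omega
          _ ≤ (2 ^ (k + 1)) ^ (2 ^ q k) := Nat.le_self_pow (by positivity) _
  -- doubling
  have hdbl : ∀ m : ℕ, 1 ≤ m → 2 * q m ≤ q (m + 1) := by
    intro m hm
    rw [hrec m hm]
    have h1' : q m < 2 ^ q m := (Nat.lt_two_pow_self (n := q m))
    calc 2 * q m ≤ 2 * 2 ^ q m := by omega
      _ = 2 ^ (q m + 1) := by ring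
      _ ≤ 2 ^ (2 ^ q m) := Nat.pow_le_pow_right (by norm_num) (by omega)
      _ ≤ (2 ^ (m + 1)) ^ (2 ^ q m) :=
          Nat.pow_le_pow_left (Nat.le_self_pow (by omega) 2) _
  intro n hn
  -- geometric lower bound for q
  have hgeo : ∀ k : ℕ, q (n + 1) * 2 ^ k ≤ q (n + 1 + k) := by
    intro k
    induction k with
    | zero => simp
    | succ j ih =>
      have := hdbl (n + 1 + j) (by omega)
      calc q (n + 1) * 2 ^ (j + 1) = (q (n + 1) * 2 ^ j) * 2 := by ring
        _ ≤ q (n + 1 + j) * 2 := by omega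
        _ = 2 * q (n + 1 + j) := by ring
        _ ≤ q (n + 1 + j + 1) := this
        _ = q (n + 1 + (j + 1)) := by ring_nf
  have hqn1pos : 0 < q (n + 1) := by have := hq2 (n + 1) (by omega); omega
  have hQ : (0:ℝ) < (q (n + 1) : ℝ) := by exact_mod_cast hqn1pos
  -- pointwise bound
  have hle : ∀ k : ℕ, (1 : ℝ) / q (n + 1 + k) ≤ (1 / q (n + 1)) * (1 / 2) ^ k := by
    intro k
    have h := hgeo k
    have h' : (q (n + 1) : ℝ) * 2 ^ k ≤ (q (n + 1 + k) : ℝ) := by exact_mod_cast h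
    have hpos : (0:ℝ) < (q (n + 1) : ℝ) * 2 ^ k := by positivity
    rw [one_div, one_div, one_div, inv_pow, ← mul_inv]
    exact inv_anti₀ hpos (by simpa using h')
  have hsum2 : Summable (fun k : ℕ => (1 / (q (n + 1) : ℝ)) * (1 / 2) ^ k) := by
    apply Summable.mul_left
    exact summable_geometric_of_lt_one (by norm_num) (by norm_num)
  have hsum1 : Summable (fun k : ℕ => (1 : ℝ) / q (n + 1 + k)) := by
    apply Summable.of_nonneg_of_le (fun k => by positivity) hle hsum2
  have htsum2 : (∑' k : ℕ, (1 / (q (n + 1) : ℝ)) * (1 / 2) ^ k)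
      = (1 / (q (n + 1) : ℝ)) * 2 := by
    rw [tsum_mul_left, tsum_geometric_of_lt_one (by norm_num) (by norm_num)]
    norm_num
  have hstep : (∑' k : ℕ, (1 : ℝ) / q (n + 1 + k)) ≤ (1 / (q (n + 1) : ℝ)) * 2 := by
    rw [← htsum2]; exact Summable.tsum_le_tsum hle hsum1 hsum2
  refine lt_of_le_of_lt hstep ?_
  -- final strict inequality: 2 / q(n+1) < 1 / (2^n)^(2^{q n})
  have hC : (0:ℝ) < ((2 : ℝ) ^ n) ^ (2 ^ q n) := by positivity
  rw [div_mul_eq_mul_div, one_mul, div_lt_div_iff₀ hQ hC, one_mul]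
  have hqval : (q (n + 1) : ℝ) = 2 ^ (2 ^ q n) * ((2 : ℝ) ^ n) ^ (2 ^ q n) := by
    rw [hrec n hn]
    push_cast
    rw [pow_succ, mul_comm ((2:ℝ)^n) 2, mul_pow]
  rw [hqval]
  have h4 : (4:ℝ) ≤ 2 ^ (2 ^ q n) := by
    have : 2 ≤ 2 ^ q n := by
      have := hq2 n hn
      calc 2 ≤ q n := this
        _ ≤ 2 ^ q n := Nat.le_of_lt (Nat.lt_two_pow_self (n := q n))
    calc (4:ℝ) = 2 ^ 2 := by norm_num
      _ ≤ 2 ^ (2 ^ q n) := by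
        apply pow_le_pow_right₀ (by norm_num) this
  nlinarith [hC]
end

section
/- Define q : ℕ → ℕ recursively by q₁ = 2 and q_{n+1} = (2^{n+1})^{2^{q_n}}, and set α := ∑_{n=1}^∞ 1/q_n. Then α satisfies property (UL): for every λ > 1 and every N ∈ ℕ, the inequality |α − p/q| < λ^{−q^N} has infinitely many solutions p, q ∈ ℕ with gcd(p,q) = 1. -/
/-- `2*A ≤ 2^A`. -/
lemma UL_two_mul_le_two_pow (A : ℕ) : 2 * A ≤ 2 ^ A := by
  induction A with
  | zero => simp
  | succ n ih =>
    rcases Nat.eq_zero_or_pos n with h | h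
    · subst h; norm_num
    · have h2 : 2 ≤ 2 ^ n := by
        calc 2 = 2 ^ 1 := by norm_num
        _ ≤ 2 ^ n := Nat.pow_le_pow_right (by norm_num) h
      have : 2 * (n + 1) = 2 * n + 2 := by ring
      rw [this, pow_succ]
      omega

lemma UL_succ_le_two_pow (m : ℕ) : m + 1 ≤ 2 ^ m := Nat.lt_two_pow_self

/-- Polynomial growth beaten by `2^k`. -/
lemma UL_nat_growth (M N : ℕ) : ∃ c : ℕ, ∀ k : ℕ, c ≤ k → M + N * k + 1 ≤ 2 ^ k := by
  set A := M + N + 2 with hA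
  refine ⟨2 * A, fun k hk => ?_⟩
  have h1 : M + N * k + 1 ≤ A * (k + 1) := by
    have : A * (k + 1) = A * k + A := by ring
    have hNk : N * k ≤ A * k := Nat.mul_le_mul_right k (by omega)
    omega
  have h2 : A * (k + 1) ≤ 2 * A * (k - A + 1) := by
    have : k + 1 ≤ 2 * (k - A + 1) := by omega
    calc A * (k + 1) ≤ A * (2 * (k - A + 1)) := Nat.mul_le_mul_left A this
      _ = 2 * A * (k - A + 1) := by ring
  have h3 : 2 * A * (k - A + 1) ≤ 2 ^ A * 2 ^ (k - A) :=
    Nat.mul_le_mul (UL_two_mul_le_two_pow A) (UL_succ_le_two_pow (k - A))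
  have h4 : 2 ^ A * 2 ^ (k - A) = 2 ^ k := by
    rw [← pow_add]; congr 1; omega
  omega

/-- Numerator of the partial sum `∑_{k=1}^{n+1} 1/q_k`, with denominator `q (n+1)`. -/
def UL_Pnum (q : ℕ → ℕ) : ℕ → ℕ
  | 0 => 1
  | n + 1 => UL_Pnum q n * (q (n + 2) / q (n + 1)) + 1

/-- With `q₁ = 2`, `q_{n+1} = (2^{n+1})^{2^{q_n}}` and
`α := ∑_{n=1}^∞ 1/q_n`, the number `α` satisfies property (UL): for every
`λ > 1` and every `N ∈ ℕ`, the inequality `|α − p/q| < λ^{−q^N}` has infinitely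
many solutions `p, q ∈ ℕ` with `gcd(p,q) = 1`. -/
theorem tower_power_sum_is_ultra_liouville
    (q : ℕ → ℕ) (h1 : q 1 = 2)
    (hrec : ∀ n : ℕ, 1 ≤ n → q (n + 1) = (2 ^ (n + 1)) ^ (2 ^ q n))
    (α : ℝ) (hα : α = ∑' n : ℕ, (1 : ℝ) / q (n + 1)) :
    ∀ l : ℝ, 1 < l → ∀ N : ℕ,
      {pq : ℕ × ℕ | 1 ≤ pq.2 ∧ Nat.gcd pq.1 pq.2 = 1 ∧
        |α - (pq.1 : ℝ) / (pq.2 : ℝ)| < l ^ (-((pq.2 : ℝ) ^ N) : ℝ)}.Infinite := by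
  -- Structure of q: each q n (n ≥ 1) is a power of two with controlled exponent.
  have hq : ∀ n : ℕ, 1 ≤ n → ∃ k : ℕ, q n = 2 ^ k ∧ 1 ≤ k ∧ n ≤ k ∧ k + 1 ≤ q n := by
    intro n hn
    induction n with
    | zero => omega
    | succ m ih =>
      rcases Nat.eq_zero_or_pos m with hm | hm
      · subst hm
        exact ⟨1, by simpa using h1, le_refl 1, le_refl 1, by rw [h1]⟩
      · have hrecm := hrec m hm
        set k' := (m + 1) * 2 ^ q m with hk'
        have hqm1 : q (m + 1) = 2 ^ k' := by
          rw [hrecm, ← pow_mul]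
        obtain ⟨k, hqk, hk1, hnk, hkq⟩ := ih hm
        have hqmk : q m ≤ 2 ^ q m := le_of_lt Nat.lt_two_pow_self
        have hk'big : q m ≤ k' := le_trans hqmk (Nat.le_mul_of_pos_left _ (by omega))
        refine ⟨k', hqm1, by omega, ?_, ?_⟩
        · -- m + 1 ≤ k'
          have : m + 1 ≤ (m + 1) * 2 ^ q m := Nat.le_mul_of_pos_right _ (Nat.pow_pos (by norm_num))
          omega
        · rw [hqm1]; exact Nat.lt_two_pow_self
  have hq2 : ∀ n : ℕ, 1 ≤ n → 2 ≤ q n := by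
    intro n hn
    obtain ⟨k, hqk, hk1, _, _⟩ := hq n hn
    rw [hqk]
    calc 2 = 2 ^ 1 := by norm_num
    _ ≤ 2 ^ k := Nat.pow_le_pow_right (by norm_num) hk1
  -- doubling divisibility
  have hdvd : ∀ n : ℕ, 1 ≤ n → 2 * q n ∣ q (n + 1) := by
    intro n hn
    obtain ⟨k, hqk, hk1, hnk, hkq⟩ := hq n hn
    obtain ⟨k', hqk', _, _, _⟩ := hq (n + 1) (by omega)
    have hk'form : q (n + 1) = 2 ^ ((n + 1) * 2 ^ q n) := by
      rw [hrec n hn, ← pow_mul]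
    have hqmk : q n ≤ 2 ^ q n := le_of_lt Nat.lt_two_pow_self
    have hle : k + 1 ≤ (n + 1) * 2 ^ q n := by
      have : q n ≤ (n + 1) * 2 ^ q n := le_trans hqmk (Nat.le_mul_of_pos_left _ (by omega))
      omega
    rw [hqk, hk'form]
    calc 2 * 2 ^ k = 2 ^ (k + 1) := by ring
    _ ∣ 2 ^ ((n + 1) * 2 ^ q n) := pow_dvd_pow 2 hle
  have hdouble : ∀ n : ℕ, 1 ≤ n → 2 * q n ≤ q (n + 1) := by
    intro n hn
    exact Nat.le_of_dvd (by have := hq2 (n + 1) (by omega); omega) (hdvd n hn)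
  have hpos : ∀ n : ℕ, 1 ≤ n → 0 < q n := fun n hn => by have := hq2 n hn; omega
  -- q n ≥ 2^n
  have hgrow : ∀ n : ℕ, 1 ≤ n → 2 ^ n ≤ q n := by
    intro n hn
    induction n with
    | zero => omega
    | succ m ih =>
      rcases Nat.eq_zero_or_pos m with hm | hm
      · subst hm; simp [h1]
      · have := hdouble m hm
        have := ih hm
        calc 2 ^ (m + 1) = 2 * 2 ^ m := by ring
        _ ≤ 2 * q m := by omega
        _ ≤ q (m + 1) := hdouble m hm
  -- summability
  set f : ℕ → ℝ := fun n => (1 : ℝ) / q (n + 1) with hf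
  have hfpos : ∀ n, 0 < f n := by
    intro n
    have := hpos (n + 1) (by omega)
    positivity
  have hfle : ∀ n, f n ≤ (1 / 2 : ℝ) ^ (n + 1) := by
    intro n
    have h2n : (2 : ℝ) ^ (n + 1) ≤ (q (n + 1) : ℝ) := by
      exact_mod_cast hgrow (n + 1) (by omega)
    have hp : (0 : ℝ) < 2 ^ (n + 1) := by positivity
    rw [hf]
    simp only [one_div, div_pow, one_pow, ← inv_pow]
    rw [inv_pow]
    exact inv_anti₀ hp h2n
  have hsummable : Summable f := by
    apply Summable.of_nonneg_of_le (fun n => (hfpos n).le) hfle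
    exact (summable_geometric_of_lt_one (by norm_num) (by norm_num)).comp_injective
      (add_left_injective 1)
  -- partial sums equal UL_Pnum q n / q (n+1)
  have hPsum : ∀ n : ℕ, ∑ k ∈ Finset.range (n + 1), f k = (UL_Pnum q n : ℝ) / (q (n + 1) : ℝ) := by
    intro n
    induction n with
    | zero => simp [f, UL_Pnum, h1]
    | succ m ih =>
      have hd : q (m + 1) ∣ q (m + 2) := dvd_trans (dvd_mul_left _ 2) (hdvd (m + 1) (by omega))
      have hne1 : (q (m + 1) : ℝ) ≠ 0 := Nat.cast_ne_zero.mpr (hpos (m + 1) (by omega)).ne'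
      have hne2 : (q (m + 2) : ℝ) ≠ 0 := Nat.cast_ne_zero.mpr (hpos (m + 2) (by omega)).ne'
      have hcast : ((q (m + 2) / q (m + 1) : ℕ) : ℝ) = (q (m + 2) : ℝ) / (q (m + 1) : ℝ) :=
        Nat.cast_div hd hne1
      rw [Finset.sum_range_succ, ih]
      show (UL_Pnum q m : ℝ) / (q (m + 1) : ℝ) + 1 / (q (m + 2) : ℝ)
          = (UL_Pnum q (m + 1) : ℝ) / (q (m + 2) : ℝ)
      rw [show UL_Pnum q (m + 1) = UL_Pnum q m * (q (m + 2) / q (m + 1)) + 1 from rfl]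
      push_cast [hcast]
      field_simp
  -- UL_Pnum is odd
  have hodd : ∀ n : ℕ, Odd (UL_Pnum q n) := by
    intro n
    induction n with
    | zero => exact ⟨0, rfl⟩
    | succ m ih =>
      have hd : q (m + 1) ∣ q (m + 2) := dvd_trans (dvd_mul_left _ 2) (hdvd (m + 1) (by omega))
      have h2d : 2 ∣ q (m + 2) / q (m + 1) := by
        rw [Nat.dvd_div_iff_mul_dvd hd]
        have := hdvd (m + 1) (by omega)
        rwa [mul_comm] at this
      rw [show UL_Pnum q (m + 1) = UL_Pnum q m * (q (m + 2) / q (m + 1)) + 1 from rfl]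
      rcases h2d with ⟨t, ht⟩
      exact ⟨UL_Pnum q m * t, by rw [ht]; ring⟩
  -- gcd
  have hgcd : ∀ n : ℕ, Nat.gcd (UL_Pnum q n) (q (n + 1)) = 1 := by
    intro n
    obtain ⟨k, hqk, _, _, _⟩ := hq (n + 1) (by omega)
    rw [hqk]
    exact Nat.Coprime.pow_right k ((hodd n).coprime_two_right)
  -- geometric growth of the tail terms
  have hqgeom : ∀ n i : ℕ, 1 ≤ n → 2 ^ i * q n ≤ q (n + i) := by
    intro n i hn
    induction i with
    | zero => simp
    | succ j ih =>
      calc 2 ^ (j + 1) * q n = 2 * (2 ^ j * q n) := by ring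
      _ ≤ 2 * q (n + j) := by omega
      _ ≤ q (n + j + 1) := hdouble (n + j) (by omega)
  -- tail bounds
  have htail : ∀ n : ℕ,
      0 ≤ α - ∑ k ∈ Finset.range (n + 1), f k ∧
      α - ∑ k ∈ Finset.range (n + 1), f k ≤ 2 / (q (n + 2) : ℝ) := by
    intro n
    have hsplit := Summable.sum_add_tsum_nat_add (f := f) (n + 1) hsummable
    have htsum : α - ∑ k ∈ Finset.range (n + 1), f k = ∑' i : ℕ, f (i + (n + 1)) := by
      rw [hα]; linarith [hsplit]
    have hsumtail : Summable fun i => f (i + (n + 1)) := (summable_nat_add_iff (n + 1)).2 hsummable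
    constructor
    · rw [htsum]
      exact tsum_nonneg (fun i => (hfpos _).le)
    · rw [htsum]
      have hbound : ∀ i : ℕ, f (i + (n + 1)) ≤ (1 / 2 : ℝ) ^ i * (1 / (q (n + 2) : ℝ)) := by
        intro i
        have hg : 2 ^ i * q (n + 2) ≤ q (n + 2 + i) := hqgeom (n + 2) i (by omega)
        have hgr : (2 : ℝ) ^ i * (q (n + 2) : ℝ) ≤ (q (i + n + 2) : ℝ) := by
          have : n + 2 + i = i + n + 2 := by omega
          rw [← this]; exact_mod_cast hg
        have hp1 : (0 : ℝ) < 2 ^ i * (q (n + 2) : ℝ) := by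
          have := hpos (n + 2) (by omega); positivity
        have : f (i + (n + 1)) = 1 / (q (i + n + 2) : ℝ) := rfl
        rw [this]
        have h2 : (1 : ℝ) / (q (i + n + 2) : ℝ) ≤ 1 / (2 ^ i * (q (n + 2) : ℝ)) := by
          exact one_div_le_one_div_of_le hp1 hgr
        calc (1 : ℝ) / (q (i + n + 2) : ℝ) ≤ 1 / (2 ^ i * (q (n + 2) : ℝ)) := h2
        _ = (1 / 2 : ℝ) ^ i * (1 / (q (n + 2) : ℝ)) := by
            rw [div_pow, one_pow]; field_simp
      have hgsum : Summable fun i : ℕ => (1 / 2 : ℝ) ^ i * (1 / (q (n + 2) : ℝ)) :=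
        (summable_geometric_of_lt_one (by norm_num) (by norm_num)).mul_right _
      calc (∑' i : ℕ, f (i + (n + 1))) ≤ ∑' i : ℕ, (1 / 2 : ℝ) ^ i * (1 / (q (n + 2) : ℝ)) :=
            Summable.tsum_le_tsum hbound hsumtail hgsum
      _ = (∑' i : ℕ, (1 / 2 : ℝ) ^ i) * (1 / (q (n + 2) : ℝ)) := tsum_mul_right
      _ = 2 / (q (n + 2) : ℝ) := by
          rw [tsum_geometric_of_lt_one (by norm_num) (by norm_num)]
          norm_num [div_eq_mul_inv]
  -- main argument
  intro l hl N
  have hl0 : (0 : ℝ) < l := lt_trans one_pos hl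
  obtain ⟨M, hM⟩ := pow_unbounded_of_one_lt l (one_lt_two : (1 : ℝ) < 2)
  obtain ⟨c, hc⟩ := UL_nat_growth M N
  set c' := max c 1 with hc'
  set F : ℕ → ℕ × ℕ := fun j => (UL_Pnum q (j + c'), q (j + c' + 1)) with hF
  have hmonoq : StrictMono fun j => q (j + c' + 1) := by
    apply strictMono_nat_of_lt_succ
    intro j
    have h2 := hdouble (j + c' + 1) (by omega)
    have h3 := hq2 (j + c' + 1) (by omega)
    have : j + 1 + c' + 1 = j + c' + 1 + 1 := by omega
    rw [this]
    omega
  apply Set.infinite_of_injective_forall_mem (f := F)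
  · intro a b hab
    exact hmonoq.injective (congrArg Prod.snd hab)
  · intro j
    set n := j + c' with hn
    have hq2n : 2 ≤ q (n + 1) := hq2 (n + 1) (by omega)
    refine ⟨by simpa [hF] using (by omega : 1 ≤ q (n + 1)), by simpa [hF] using hgcd n, ?_⟩
    show |α - (UL_Pnum q n : ℝ) / (q (n + 1) : ℝ)| < l ^ (-(((q (n + 1) : ℝ)) ^ N) : ℝ)
    -- rewrite RHS
    set A := q (n + 1) ^ N with hA
    have hAne : A ≠ 0 := pow_ne_zero N (by omega)
    have hrhs : l ^ (-(((q (n + 1) : ℝ)) ^ N) : ℝ) = (l ^ A)⁻¹ := by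
      rw [show ((((q (n + 1) : ℝ)) ^ N) : ℝ) = ((A : ℕ) : ℝ) by push_cast [hA]; ring]
      rw [Real.rpow_neg hl0.le, Real.rpow_natCast]
    rw [hrhs]
    -- bound the LHS
    obtain ⟨ht0, ht2⟩ := htail n
    rw [hPsum n] at ht0 ht2
    rw [abs_of_nonneg ht0]
    -- key numeric estimate
    obtain ⟨k, hqk, hk1, hnk, hkq⟩ := hq (n + 1) (by omega)
    have hkc : c ≤ k := by omega
    have hgrowk := hc k hkc
    have hAeq : A = 2 ^ (k * N) := by rw [hA, hqk, ← pow_mul]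
    have hexp : M * A + 1 ≤ (n + 2) * 2 ^ q (n + 1) := by
      have hM2 : M ≤ 2 ^ M := le_of_lt Nat.lt_two_pow_self
      have e1 : M * A + 1 ≤ 2 ^ (M + k * N) + 1 := by
        rw [hAeq, pow_add]
        exact Nat.add_le_add_right (Nat.mul_le_mul_right _ hM2) 1
      have e2 : 2 ^ (M + k * N) + 1 ≤ 2 ^ (M + k * N + 1) := by
        have : 1 ≤ 2 ^ (M + k * N) := Nat.one_le_two_pow
        rw [pow_succ]
        omega
      have hgrowk' : M + k * N + 1 ≤ 2 ^ k := by
        rw [Nat.mul_comm k N]; exact hgrowk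
      have e3 : 2 ^ (M + k * N + 1) ≤ 2 ^ (2 ^ k) :=
        Nat.pow_le_pow_right (by norm_num) hgrowk'
      have e4 : (2 : ℕ) ^ (2 ^ k) = 2 ^ q (n + 1) := by rw [hqk]
      have e5 : (2 : ℕ) ^ q (n + 1) ≤ (n + 2) * 2 ^ q (n + 1) :=
        Nat.le_mul_of_pos_left _ (by omega)
      omega
    have hnat : 2 ^ (M * A + 1) ≤ q (n + 2) := by
      rw [hrec (n + 1) (by omega), ← pow_mul]
      exact Nat.pow_le_pow_right (by norm_num) hexp
    have key : 2 * l ^ A < (q (n + 2) : ℝ) := by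
      have s1 : l ^ A < ((2 : ℝ) ^ M) ^ A := pow_lt_pow_left₀ hM hl0.le hAne
      have s2 : ((2 : ℝ) ^ M) ^ A = 2 ^ (M * A) := by rw [← pow_mul]
      have s3 : ((2 : ℝ)) ^ (M * A + 1) ≤ (q (n + 2) : ℝ) := by
        have := hnat
        exact_mod_cast Nat.cast_le.mpr hnat
      have s4 : (2 : ℝ) ^ (M * A + 1) = 2 * 2 ^ (M * A) := by rw [pow_succ]; ring
      nlinarith [pow_pos hl0 A]
    have hq2pos : (0 : ℝ) < (q (n + 2) : ℝ) := by
      have := hq2 (n + 2) (by omega)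
      exact_mod_cast (by omega : 0 < q (n + 2))
    have hlApos : (0 : ℝ) < l ^ A := pow_pos hl0 A
    calc α - (UL_Pnum q n : ℝ) / (q (n + 1) : ℝ) ≤ 2 / (q (n + 2) : ℝ) := ht2
    _ < (l ^ A)⁻¹ := by
        rw [inv_eq_one_div, div_lt_div_iff₀ hq2pos hlApos]
        nlinarith
end

section
/- Let α ∈ ℝ and let f, g : ℤ² → ℂ be finitely supported. Then for every n ∈ ℤ and every z ∈ 𝕋, ∑_{m∈ℤ} (f *_{2α} g)(m,n) z^m = ∑_{l∈ℤ} f̌⁽ˡ⁾(e^{2πiα(n−l)} z) · ǧ⁽ⁿ⁻ˡ⁾(e^{−2πiα l} z). -/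
open scoped ComplexConjugate

/-- The twisted convolution `(f *_{2α} g)(a) = ∑_A f(A) g(a−A) e^{−2πiα σ(a,A)}`
on finitely supported functions `ℤ² → ℂ`, where `σ((m,n),(M,N)) = mN − Mn`. -/
noncomputable def twConv (α : ℝ) (f g : ℤ × ℤ → ℂ) : ℤ × ℤ → ℂ := fun a =>
  ∑' A : ℤ × ℤ, f A * g (a - A) *
    Complex.exp (-2 * Real.pi * Complex.I * (α : ℂ) *
      ((a.1 : ℂ) * (A.2 : ℂ) - (A.1 : ℂ) * (a.2 : ℂ)))

/-- The partial Fourier transform `f̌⁽ⁿ⁾(z) = ∑_m f(m,n) z^m`. -/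
noncomputable def pFT (f : ℤ × ℤ → ℂ) (n : ℤ) (z : ℂ) : ℂ :=
  ∑' m : ℤ, f (m, n) * z ^ m

open scoped Pointwise

/-- For `α ∈ ℝ`, finitely supported `f, g : ℤ² → ℂ`, `n ∈ ℤ`
and `z ∈ 𝕋`:
`∑_m (f *_{2α} g)(m,n) z^m
  = ∑_l f̌⁽ˡ⁾(e^{2πiα(n−l)} z) · ǧ⁽ⁿ⁻ˡ⁾(e^{−2πiα l} z)`. -/
theorem twisted_convolution_partial_fourier
    (α : ℝ) (f g : ℤ × ℤ → ℂ)
    (hf : (Function.support f).Finite) (hg : (Function.support g).Finite)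
    (n : ℤ) (z : ℂ) (hz : ‖z‖ = 1) :
    ∑' m : ℤ, twConv α f g (m, n) * z ^ m
      = ∑' l : ℤ,
          pFT f l (Complex.exp (2 * Real.pi * Complex.I * (α : ℂ) * ((n : ℂ) - (l : ℂ))) * z) *
          pFT g (n - l) (Complex.exp (-2 * Real.pi * Complex.I * (α : ℂ) * (l : ℂ)) * z) := by
  classical
  have hz0 : z ≠ 0 := by
    intro h; rw [h] at hz; simp at hz
  set sf := hf.toFinset with hsf
  set sg := hg.toFinset with hsg
  set Mf := sf.image Prod.fst with hMf
  set Lf := sf.image Prod.snd with hLf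
  set Mg := sg.image Prod.fst with hMg
  have hfmem : ∀ A, A ∉ sf → f A = 0 := by
    intro A hA; by_contra h; exact hA (hf.mem_toFinset.mpr h)
  have hgmem : ∀ A, A ∉ sg → g A = 0 := by
    intro A hA; by_contra h; exact hA (hg.mem_toFinset.mpr h)
  -- twisted convolution as a finite sum
  have htw : ∀ m : ℤ, twConv α f g (m, n)
      = ∑ A ∈ sf, f A * g ((m, n) - A) *
          Complex.exp (-2 * Real.pi * Complex.I * (α : ℂ) *
            ((m : ℂ) * (A.2 : ℂ) - (A.1 : ℂ) * (n : ℂ))) := by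
    intro m
    simp only [twConv]
    exact tsum_eq_sum (fun A hA => by rw [hfmem A hA]; ring)
  -- partial Fourier transforms as finite sums
  have hpf : ∀ (l : ℤ) (w : ℂ), pFT f l w = ∑ M ∈ Mf, f (M, l) * w ^ M := by
    intro l w
    simp only [pFT]
    refine tsum_eq_sum (fun M hM => ?_)
    have : f (M, l) = 0 := by
      apply hfmem
      intro h
      exact hM (Finset.mem_image.mpr ⟨(M, l), h, rfl⟩)
    rw [this]; ring
  have hpg : ∀ (l : ℤ) (w : ℂ), pFT g l w = ∑ k ∈ Mg, g (k, l) * w ^ k := by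
    intro l w
    simp only [pFT]
    refine tsum_eq_sum (fun k hk => ?_)
    have : g (k, l) = 0 := by
      apply hgmem
      intro h
      exact hk (Finset.mem_image.mpr ⟨(k, l), h, rfl⟩)
    rw [this]; ring
  -- LHS as a finite sum over Mf + Mg
  have hLHS : (∑' m : ℤ, twConv α f g (m, n) * z ^ m)
      = ∑ m ∈ Mf + Mg, twConv α f g (m, n) * z ^ m := by
    refine tsum_eq_sum (fun m hm => ?_)
    rw [htw m]
    rw [Finset.sum_eq_zero, zero_mul]
    intro A hA
    rcases eq_or_ne (g ((m, n) - A)) 0 with h0 | h0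
    · rw [h0]; ring
    · exfalso
      apply hm
      have h1 : A.1 ∈ Mf := Finset.mem_image.mpr ⟨A, hA, rfl⟩
      have h2 : m - A.1 ∈ Mg :=
        Finset.mem_image.mpr ⟨(m, n) - A, hg.mem_toFinset.mpr h0, rfl⟩
      have := Finset.add_mem_add h1 h2
      simpa using this
  -- RHS as a finite sum over Lf
  have hRHS : (∑' l : ℤ,
          pFT f l (Complex.exp (2 * Real.pi * Complex.I * (α : ℂ) * ((n : ℂ) - (l : ℂ))) * z) *
          pFT g (n - l) (Complex.exp (-2 * Real.pi * Complex.I * (α : ℂ) * (l : ℂ)) * z))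
      = ∑ l ∈ Lf,
          pFT f l (Complex.exp (2 * Real.pi * Complex.I * (α : ℂ) * ((n : ℂ) - (l : ℂ))) * z) *
          pFT g (n - l) (Complex.exp (-2 * Real.pi * Complex.I * (α : ℂ) * (l : ℂ)) * z) := by
    refine tsum_eq_sum (fun l hl => ?_)
    have h0 : pFT f l (Complex.exp (2 * Real.pi * Complex.I * (α : ℂ) * ((n : ℂ) - (l : ℂ))) * z)
        = 0 := by
      rw [hpf]
      refine Finset.sum_eq_zero (fun M _ => ?_)
      have : f (M, l) = 0 := by
        apply hfmem
        intro h
        exact hl (Finset.mem_image.mpr ⟨(M, l), h, rfl⟩)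
      rw [this]; ring
    rw [h0, zero_mul]
  rw [hLHS, hRHS]
  -- expand RHS as a triple sum
  have hRHS2 : ∀ l : ℤ,
      pFT f l (Complex.exp (2 * Real.pi * Complex.I * (α : ℂ) * ((n : ℂ) - (l : ℂ))) * z) *
        pFT g (n - l) (Complex.exp (-2 * Real.pi * Complex.I * (α : ℂ) * (l : ℂ)) * z)
      = ∑ M ∈ Mf, ∑ k ∈ Mg,
          f (M, l) * g (k, n - l) *
            ((Complex.exp (2 * Real.pi * Complex.I * (α : ℂ) * ((n : ℂ) - (l : ℂ))) * z) ^ M *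
             (Complex.exp (-2 * Real.pi * Complex.I * (α : ℂ) * (l : ℂ)) * z) ^ k) := by
    intro l
    rw [hpf, hpg, Finset.sum_mul_sum]
    exact Finset.sum_congr rfl (fun M _ => Finset.sum_congr rfl (fun k _ => by ring))
  simp only [hRHS2]
  -- RHS as a sum over pairs, then over sf
  rw [Finset.sum_comm]
  rw [← Finset.sum_product (s := Mf) (t := Lf)
      (f := fun A => ∑ k ∈ Mg,
          f (A.1, A.2) * g (k, n - A.2) *
            ((Complex.exp (2 * Real.pi * Complex.I * (α : ℂ) * ((n : ℂ) - (A.2 : ℂ))) * z) ^ A.1 *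
             (Complex.exp (-2 * Real.pi * Complex.I * (α : ℂ) * (A.2 : ℂ)) * z) ^ k))]
  rw [← Finset.sum_subset (h := fun A hA => Finset.mem_product.mpr
      ⟨Finset.mem_image.mpr ⟨A, hA, rfl⟩, Finset.mem_image.mpr ⟨A, hA, rfl⟩⟩)
      (f := fun A => ∑ k ∈ Mg,
          f (A.1, A.2) * g (k, n - A.2) *
            ((Complex.exp (2 * Real.pi * Complex.I * (α : ℂ) * ((n : ℂ) - (A.2 : ℂ))) * z) ^ A.1 *
             (Complex.exp (-2 * Real.pi * Complex.I * (α : ℂ) * (A.2 : ℂ)) * z) ^ k))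
      (hf := fun A _ hA => Finset.sum_eq_zero (fun k _ => by
        rw [show f (A.1, A.2) = 0 from hfmem _ hA]; ring))]
  -- LHS: swap sums, then reindex m = A.1 + k
  simp only [htw, Finset.sum_mul]
  rw [Finset.sum_comm]
  refine Finset.sum_congr rfl (fun A hA => ?_)
  have hA1 : A.1 ∈ Mf := Finset.mem_image.mpr ⟨A, hA, rfl⟩
  have hsub : Mg.image (fun k => A.1 + k) ⊆ Mf + Mg := by
    intro m hm
    rcases Finset.mem_image.mp hm with ⟨k, hk, rfl⟩
    exact Finset.add_mem_add hA1 hk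
  have hvan : ∀ m ∈ Mf + Mg, m ∉ Mg.image (fun k => A.1 + k) →
      f A * g ((m, n) - A) *
        Complex.exp (-2 * (Real.pi : ℂ) * Complex.I * (α : ℂ) *
          ((m : ℂ) * (A.2 : ℂ) - (A.1 : ℂ) * (n : ℂ))) * z ^ m = 0 := by
    intro m _ hm
    have hg0 : g ((m, n) - A) = 0 := by
      apply hgmem
      intro hmem
      apply hm
      exact Finset.mem_image.mpr ⟨m - A.1,
        Finset.mem_image.mpr ⟨(m, n) - A, hmem, rfl⟩, by ring⟩
    rw [hg0]; ring
  have hinj : ∀ a ∈ Mg, ∀ b ∈ Mg, A.1 + a = A.1 + b → a = b := by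
    intro a _ b _ h; omega
  rw [← Finset.sum_subset hsub hvan, Finset.sum_image hinj]
  refine Finset.sum_congr rfl (fun k hk => ?_)
  have hgA : ((A.1 + k, n) : ℤ × ℤ) - A = (k, n - A.2) := by
    cases A with
    | mk M N => simp [Prod.ext_iff]
  have hzz : z ^ (A.1 + k) = z ^ A.1 * z ^ k := zpow_add₀ hz0 _ _
  have hexp : Complex.exp (-2 * (Real.pi : ℂ) * Complex.I * (α : ℂ) *
        (((A.1 + k : ℤ) : ℂ) * (A.2 : ℂ) - (A.1 : ℂ) * (n : ℂ)))
      = Complex.exp (2 * (Real.pi : ℂ) * Complex.I * (α : ℂ) * ((n : ℂ) - (A.2 : ℂ))) ^ A.1 *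
        Complex.exp (-2 * (Real.pi : ℂ) * Complex.I * (α : ℂ) * (A.2 : ℂ)) ^ k := by
    rw [← Complex.exp_int_mul, ← Complex.exp_int_mul, ← Complex.exp_add]
    congr 1
    push_cast
    ring
  rw [hgA, hexp, hzz, mul_zpow, mul_zpow]
  simp only [Prod.mk.eta]
  ring
end

section
/- Let α ∈ ℝ, let μ be a finite Borel measure on 𝕋, and let f : ℤ² → ℂ be finitely supported. Then ∑_{m∈ℤ} μ̌(m) · (f^⋆ *_{2α} f)(m, 0) = ∑_{n∈ℤ} ∫_𝕋 |f̌⁽ⁿ⁾(e^{2πiαn} z)|² dμ(z); in particular the left-hand side is a nonnegative real number. -/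
open MeasureTheory
open scoped ComplexConjugate

noncomputable instance : MeasurableSpace Circle := borel Circle
instance : BorelSpace Circle := ⟨rfl⟩

/-- The involution `f^⋆(a) = conj (f (−a))`. -/
noncomputable def fStar (f : ℤ × ℤ → ℂ) : ℤ × ℤ → ℂ := fun a => conj (f (-a))

noncomputable def eAux (α : ℝ) (n : ℤ) : ℂ :=
  Complex.exp (2 * Real.pi * Complex.I * (α : ℂ) * (n : ℂ))

noncomputable def muAux (μ : Measure Circle) (k : ℤ) : ℂ :=
  ∫ z : Circle, (z : ℂ) ^ k ∂μ

lemma integrable_circle_zpow (μ : Measure Circle) [IsFiniteMeasure μ] (k : ℤ) :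
    Integrable (fun z : Circle => (z : ℂ) ^ k) μ := by
  have hc : Continuous fun z : Circle => (z : ℂ) ^ k :=
    Continuous.zpow₀ continuous_subtype_val k fun z => Or.inl (Circle.coe_ne_zero z)
  exact hc.integrable_of_hasCompactSupport (HasCompactSupport.of_compactSpace _)

lemma my_integral_const_mul (μ : Measure Circle) (c : ℂ) (g : Circle → ℂ) :
    ∫ z, c * g z ∂μ = c * ∫ z, g z ∂μ := by
  simp_rw [← smul_eq_mul, integral_smul]

/-- For `α ∈ ℝ`, a finite Borel measure `μ` on `𝕋` and a
finitely supported `f : ℤ² → ℂ`: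
`∑_m μ̌(m) (f^⋆ *_{2α} f)(m,0) = ∑_n ∫_𝕋 |f̌⁽ⁿ⁾(e^{2πiαn} z)|² dμ(z)`;
in particular the left-hand side is a nonnegative real number. -/
theorem state_positivity_formula
    (α : ℝ) (μ : Measure Circle) [IsFiniteMeasure μ]
    (f : ℤ × ℤ → ℂ) (hf : (Function.support f).Finite) :
    (∑' m : ℤ, (∫ z : Circle, (z : ℂ) ^ m ∂μ) * twConv α (fStar f) f (m, 0))
        = ((∑' n : ℤ, ∫ z : Circle,
            ‖pFT f n (Complex.exp (2 * Real.pi * Complex.I * (α : ℂ) * (n : ℂ)) * z)‖ ^ 2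
              ∂μ : ℝ) : ℂ)
      ∧ 0 ≤ ∑' n : ℤ, ∫ z : Circle,
            ‖pFT f n (Complex.exp (2 * Real.pi * Complex.I * (α : ℂ) * (n : ℂ)) * z)‖ ^ 2
              ∂μ := by
  classical
  have memS : ∀ a : ℤ × ℤ, a ∈ hf.toFinset ↔ f a ≠ 0 := fun a => by
    simp [Function.mem_support]
  set S : Finset (ℤ × ℤ) := hf.toFinset with hS
  set T : Finset ℤ := S.image Prod.fst with hT
  set N : Finset ℤ := S.image Prod.snd with hN
  have memT : ∀ {k n : ℤ}, f (k, n) ≠ 0 → k ∈ T := fun {k n} h =>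
    Finset.mem_image.2 ⟨(k, n), (memS _).2 h, rfl⟩
  have memN : ∀ {k n : ℤ}, f (k, n) ≠ 0 → n ∈ N := fun {k n} h =>
    Finset.mem_image.2 ⟨(k, n), (memS _).2 h, rfl⟩
  have he0 : ∀ n : ℤ, eAux α n ≠ 0 := fun n => Complex.exp_ne_zero _
  have hconj_e : ∀ n : ℤ, conj (eAux α n) = (eAux α n)⁻¹ := by
    intro n
    simp only [eAux]
    rw [← Complex.exp_conj, ← Complex.exp_neg]
    congr 1
    simp only [map_mul, Complex.conj_I, Complex.conj_ofReal, map_ofNat, map_intCast]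
    ring
  have hexp : ∀ n j : ℤ,
      Complex.exp (2 * Real.pi * Complex.I * (α : ℂ) * ((j : ℂ) * (n : ℂ))) = eAux α n ^ j := by
    intro n j
    simp only [eAux]
    rw [← Complex.exp_int_mul]
    congr 1
    ring
  -- Step A1: the twisted convolution as a finite sum
  have hA1 : ∀ m : ℤ, twConv α (fStar f) f (m, 0)
      = ∑ B ∈ S, conj (f B) * f (m + B.1, B.2) * eAux α B.2 ^ m := by
    intro m
    have hvan : ∀ A : ℤ × ℤ, A ∉ S.image (fun x => -x) →
        fStar f A * f ((m, 0) - A) *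
          Complex.exp (-2 * Real.pi * Complex.I * (α : ℂ) *
            ((((m, 0) : ℤ × ℤ).1 : ℂ) * (A.2 : ℂ) - (A.1 : ℂ) * (((m, 0) : ℤ × ℤ).2 : ℂ))) = 0 := by
      intro A hA
      have h0 : f (-A) = 0 := by
        by_contra h
        exact hA (Finset.mem_image.2 ⟨-A, (memS _).2 h, by simp⟩)
      simp [fStar, h0]
    rw [twConv, tsum_eq_sum hvan, Finset.sum_image (fun x _ y _ h => neg_injective h)]
    refine Finset.sum_congr rfl fun B hB => ?_
    have h1 : ((m, 0) : ℤ × ℤ) - -B = (m + B.1, B.2) := by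
      ext <;> simp
    have h2 : Complex.exp (-2 * Real.pi * Complex.I * (α : ℂ) *
        ((((m, 0) : ℤ × ℤ).1 : ℂ) * (((-B : ℤ × ℤ).2 : ℤ) : ℂ)
          - (((-B : ℤ × ℤ).1 : ℤ) : ℂ) * (((m, 0) : ℤ × ℤ).2 : ℂ)))
        = eAux α B.2 ^ m := by
      rw [← hexp B.2 m]
      congr 1
      simp only [Prod.fst_neg, Prod.snd_neg]
      push_cast
      ring
    rw [h1, h2]
    simp [fStar]
  set D : Finset ℤ := (S ×ˢ S).image (fun p => p.1.1 - p.2.1) with hD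
  have hmemD : ∀ {m : ℤ} {B : ℤ × ℤ}, B ∈ S → f (m + B.1, B.2) ≠ 0 → m ∈ D := by
    intro m B hB hne
    exact Finset.mem_image.2 ⟨((m + B.1, B.2), B), Finset.mem_product.2 ⟨(memS _).2 hne, hB⟩, by simp⟩
  have hvanm : ∀ m : ℤ, m ∉ D → muAux μ m * twConv α (fStar f) f (m, 0) = 0 := by
    intro m hm
    have h0 : (∑ B ∈ S, conj (f B) * f (m + B.1, B.2) * eAux α B.2 ^ m) = 0 :=
      Finset.sum_eq_zero fun B hB => by
        by_cases h : f (m + B.1, B.2) = 0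
        · simp [h]
        · exact absurd (hmemD hB h) hm
    rw [hA1 m, h0, mul_zero]
  have hinner : ∀ B ∈ S,
      (∑ m ∈ D, muAux μ m * (conj (f B) * f (m + B.1, B.2) * eAux α B.2 ^ m))
        = ∑ k ∈ T, conj (f B) * f (k, B.2) * eAux α B.2 ^ (k - B.1) * muAux μ (k - B.1) := by
    intro B hB
    have husupp : ∀ m : ℤ, f (m + B.1, B.2) ≠ 0 → m ∈ D ∧ m + B.1 ∈ T := fun m h =>
      ⟨hmemD hB h, memT h⟩
    have h1 : (∑ m ∈ D, muAux μ m * (conj (f B) * f (m + B.1, B.2) * eAux α B.2 ^ m))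
        = ∑ m ∈ D ∪ T.image (fun k => k - B.1),
            muAux μ m * (conj (f B) * f (m + B.1, B.2) * eAux α B.2 ^ m) := by
      refine Finset.sum_subset Finset.subset_union_left fun m _ hm => ?_
      by_cases h : f (m + B.1, B.2) = 0
      · simp [h]
      · exact absurd (husupp m h).1 hm
    have h2 : (∑ m ∈ D ∪ T.image (fun k => k - B.1),
            muAux μ m * (conj (f B) * f (m + B.1, B.2) * eAux α B.2 ^ m))
        = ∑ m ∈ T.image (fun k => k - B.1),
            muAux μ m * (conj (f B) * f (m + B.1, B.2) * eAux α B.2 ^ m) := by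
      refine (Finset.sum_subset Finset.subset_union_right fun m _ hm => ?_).symm
      by_cases h : f (m + B.1, B.2) = 0
      · simp [h]
      · exact absurd (Finset.mem_image.2 ⟨m + B.1, (husupp m h).2, by omega⟩) hm
    rw [h1, h2, Finset.sum_image (fun x _ y _ h => by omega)]
    refine Finset.sum_congr rfl fun k hk => ?_
    rw [sub_add_cancel]
    ring
  have hLHS : (∑' m : ℤ, muAux μ m * twConv α (fStar f) f (m, 0))
      = ∑ B ∈ T ×ˢ N, ∑ k ∈ T,
          conj (f B) * f (k, B.2) * eAux α B.2 ^ (k - B.1) * muAux μ (k - B.1) := by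
    rw [tsum_eq_sum hvanm]
    calc ∑ m ∈ D, muAux μ m * twConv α (fStar f) f (m, 0)
        = ∑ m ∈ D, ∑ B ∈ S, muAux μ m * (conj (f B) * f (m + B.1, B.2) * eAux α B.2 ^ m) :=
          Finset.sum_congr rfl fun m _ => by rw [hA1 m, Finset.mul_sum]
      _ = ∑ B ∈ S, ∑ m ∈ D, muAux μ m * (conj (f B) * f (m + B.1, B.2) * eAux α B.2 ^ m) :=
          Finset.sum_comm
      _ = ∑ B ∈ S, ∑ k ∈ T, conj (f B) * f (k, B.2) * eAux α B.2 ^ (k - B.1) * muAux μ (k - B.1) :=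
          Finset.sum_congr rfl hinner
      _ = ∑ B ∈ T ×ˢ N, ∑ k ∈ T,
            conj (f B) * f (k, B.2) * eAux α B.2 ^ (k - B.1) * muAux μ (k - B.1) := by
          refine Finset.sum_subset
            (fun B hB => Finset.mem_product.2
              ⟨Finset.mem_image.2 ⟨B, hB, rfl⟩, Finset.mem_image.2 ⟨B, hB, rfl⟩⟩)
            fun B _ hB => ?_
          have h0 : f B = 0 := by
            by_contra h
            exact hB ((memS B).2 h)
          exact Finset.sum_eq_zero fun k _ => by simp [h0]
  -- RHS
  have hpFT : ∀ (n : ℤ) (w : ℂ), pFT f n w = ∑ k ∈ T, f (k, n) * w ^ k := by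
    intro n w
    refine tsum_eq_sum fun k hk => ?_
    have h0 : f (k, n) = 0 := by
      by_contra h
      exact hk (memT h)
    simp [h0]
  have habs : ∀ (n : ℤ) (z : Circle),
      ((‖pFT f n (eAux α n * (z : ℂ))‖ ^ 2 : ℝ) : ℂ)
        = ∑ k ∈ T, ∑ j ∈ T,
            f (k, n) * conj (f (j, n)) * eAux α n ^ (k - j) * (z : ℂ) ^ (k - j) := by
    intro n z
    have hw : eAux α n * (z : ℂ) ≠ 0 := mul_ne_zero (he0 n) (Circle.coe_ne_zero z)
    have hcw : conj (eAux α n * (z : ℂ)) = (eAux α n * (z : ℂ))⁻¹ := by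
      rw [map_mul, hconj_e n, ← Circle.coe_inv_eq_conj, Circle.coe_inv, mul_inv]
    have h0 : ((‖pFT f n (eAux α n * (z : ℂ))‖ ^ 2 : ℝ) : ℂ)
        = pFT f n (eAux α n * (z : ℂ)) * conj (pFT f n (eAux α n * (z : ℂ))) := by
      rw [Complex.sq_norm]
      exact (Complex.mul_conj _).symm
    rw [h0, hpFT, map_sum, Finset.sum_mul_sum]
    refine Finset.sum_congr rfl fun k _ => Finset.sum_congr rfl fun j _ => ?_
    rw [map_mul, map_zpow₀, hcw, inv_zpow, ← zpow_neg]
    have hww : (eAux α n * (z : ℂ)) ^ k * (eAux α n * (z : ℂ)) ^ (-j)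
        = eAux α n ^ (k - j) * (z : ℂ) ^ (k - j) := by
      rw [← zpow_add₀ hw, ← sub_eq_add_neg, mul_zpow]
    calc f (k, n) * (eAux α n * (z : ℂ)) ^ k * (conj (f (j, n)) * (eAux α n * (z : ℂ)) ^ (-j))
        = f (k, n) * conj (f (j, n))
            * ((eAux α n * (z : ℂ)) ^ k * (eAux α n * (z : ℂ)) ^ (-j)) := by ring
      _ = f (k, n) * conj (f (j, n)) * eAux α n ^ (k - j) * (z : ℂ) ^ (k - j) := by
            rw [hww]; ring
  have hIntegral : ∀ n : ℤ,
      ((∫ z : Circle, ‖pFT f n (eAux α n * (z : ℂ))‖ ^ 2 ∂μ : ℝ) : ℂ)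
        = ∑ k ∈ T, ∑ j ∈ T,
            f (k, n) * conj (f (j, n)) * eAux α n ^ (k - j) * muAux μ (k - j) := by
    intro n
    have hInt : ∀ k j : ℤ,
        Integrable (fun z : Circle =>
          f (k, n) * conj (f (j, n)) * eAux α n ^ (k - j) * (z : ℂ) ^ (k - j)) μ := by
      intro k j
      simpa [mul_assoc] using (integrable_circle_zpow μ (k - j)).const_mul
        (f (k, n) * conj (f (j, n)) * eAux α n ^ (k - j))
    have hcast : ((∫ z : Circle, ‖pFT f n (eAux α n * (z : ℂ))‖ ^ 2 ∂μ : ℝ) : ℂ)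
        = ∫ z : Circle, ((‖pFT f n (eAux α n * (z : ℂ))‖ ^ 2 : ℝ) : ℂ) ∂μ :=
      integral_ofReal.symm
    rw [hcast]
    rw [integral_congr_ae (Filter.Eventually.of_forall fun z => habs n z)]
    rw [integral_finset_sum _ fun k _ => integrable_finset_sum _ fun j _ => hInt k j]
    refine Finset.sum_congr rfl fun k _ => ?_
    rw [integral_finset_sum _ fun j _ => hInt k j]
    refine Finset.sum_congr rfl fun j _ => ?_
    rw [my_integral_const_mul μ (f (k, n) * conj (f (j, n)) * eAux α n ^ (k - j))
      (fun z : Circle => (z : ℂ) ^ (k - j))]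
    rfl
  have hvann : ∀ n : ℤ, n ∉ N →
      (∫ z : Circle, ‖pFT f n (eAux α n * (z : ℂ))‖ ^ 2 ∂μ) = 0 := by
    intro n hn
    have h0 : ∀ z : Circle, pFT f n (eAux α n * (z : ℂ)) = 0 := fun z => by
      rw [hpFT]
      refine Finset.sum_eq_zero fun k _ => ?_
      have h1 : f (k, n) = 0 := by
        by_contra h
        exact hn (memN h)
      simp [h1]
    simp [h0]
  have hsimp : ∀ n : ℤ,
      Complex.exp (2 * Real.pi * Complex.I * (α : ℂ) * (n : ℂ)) = eAux α n := fun _ => rfl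
  have hsimp2 : ∀ m : ℤ, (∫ z : Circle, (z : ℂ) ^ m ∂μ) = muAux μ m := fun _ => rfl
  simp only [hsimp, hsimp2]
  refine ⟨?_, tsum_nonneg fun n => integral_nonneg fun z => sq_nonneg _⟩
  rw [hLHS, tsum_eq_sum hvann, Complex.ofReal_sum, Finset.sum_product, Finset.sum_comm]
  refine Finset.sum_congr rfl fun n hn => ?_
  rw [hIntegral n]
  exact Finset.sum_comm.trans
    (Finset.sum_congr rfl fun k _ => Finset.sum_congr rfl fun Mj _ => by ring)
end

section
/- Let α ∈ ℝ and let μ be a finite Borel measure on 𝕋 whose topological support is all of 𝕋. If f : ℤ² → ℂ is finitely supported and ∑_{m∈ℤ} μ̌(m) · (f^⋆ *_{2α} f)(m, 0) = 0, then f = 0. (This is the faithfulness of the state ω_μ on the noncommutative torus when supp(μ) = 𝕋.) -/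
open MeasureTheory
open scoped ComplexConjugate

/-- The coercion image of the circle in `ℂ` is an infinite set. -/
lemma circle_coe_infinite : (Set.range (fun z : Circle => (z:ℂ))).Infinite := by
  refine Set.infinite_of_injective_forall_mem
    (f := fun n : ℕ => ((Circle.exp (1/(n+1)) : Circle) : ℂ)) ?_ (fun n => Set.mem_range_self _)
  intro n m h
  simp only [Circle.coe_exp] at h
  rw [Complex.exp_eq_exp_iff_exists_int] at h
  obtain ⟨k, hk⟩ := h
  have hk' : ((1/(n+1:ℝ) : ℝ) : ℂ) * Complex.I
      = ((1/(m+1:ℝ) + k * (2*Real.pi) : ℝ) : ℂ) * Complex.I := by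
    push_cast at hk ⊢; linear_combination hk
  have him : (1/(n+1:ℝ)) = 1/(m+1) + k*(2*Real.pi) :=
    Complex.ofReal_injective (mul_right_cancel₀ Complex.I_ne_zero hk')
  have hn : (0:ℝ) < 1/(n+1) := by positivity
  have hm : (0:ℝ) < 1/(m+1) := by positivity
  have hn1 : (1:ℝ)/(n+1) ≤ 1 := by
    rw [div_le_one (by positivity)]; linarith [Nat.cast_nonneg (α := ℝ) n]
  have hm1 : (1:ℝ)/(m+1) ≤ 1 := by
    rw [div_le_one (by positivity)]; linarith [Nat.cast_nonneg (α := ℝ) m]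
  have hpi := Real.pi_gt_three
  have hk0 : k = 0 := by
    rcases lt_trichotomy k 0 with h1 | h1 | h1
    · have : (k:ℝ) ≤ -1 := by exact_mod_cast Int.le_sub_one_of_lt h1
      nlinarith
    · exact h1
    · have : (1:ℝ) ≤ k := by exact_mod_cast h1
      nlinarith
  rw [hk0] at him
  push_cast at him
  field_simp at him
  simp at him; omega

/-- A Laurent polynomial vanishing on the whole circle has vanishing coefficients. -/
lemma laurent_coeff_zero (c : ℤ → ℂ) (s : Finset ℤ)
    (h : ∀ z : Circle, ∑ k ∈ s, c k * (z:ℂ)^k = 0) : ∀ k ∈ s, c k = 0 := by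
  rcases s.eq_empty_or_nonempty with rfl | hne
  · simp
  intro j hj
  set d : ℤ := -(s.min' hne) with hd
  have hdk : ∀ k ∈ s, 0 ≤ k + d := fun k hk => by
    have := s.min'_le k hk; omega
  set p : Polynomial ℂ := ∑ k ∈ s, Polynomial.C (c k) * Polynomial.X ^ ((k+d).toNat) with hp
  have hroot : ∀ z : Circle, p.IsRoot (z:ℂ) := by
    intro z
    have hz : (z:ℂ) ≠ 0 := z.coe_ne_zero
    have heval : p.eval (z:ℂ) = (z:ℂ)^d * ∑ k ∈ s, c k * (z:ℂ)^k := by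
      rw [hp, Polynomial.eval_finset_sum, Finset.mul_sum]
      refine Finset.sum_congr rfl fun k hk => ?_
      rw [Polynomial.eval_mul, Polynomial.eval_C, Polynomial.eval_pow, Polynomial.eval_X]
      rw [← zpow_natCast (z:ℂ), Int.toNat_of_nonneg (hdk k hk), zpow_add₀ hz]
      ring
    simp [Polynomial.IsRoot, heval, h z]
  have hp0 : p = 0 := by
    refine Polynomial.eq_zero_of_infinite_isRoot p ?_
    refine Set.Infinite.mono ?_ circle_coe_infinite
    rintro x ⟨z, rfl⟩; exact hroot z
  have hc := congrArg (Polynomial.coeff · ((j+d).toNat)) hp0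
  simp only [hp, Polynomial.finset_sum_coeff, Polynomial.coeff_C_mul,
    Polynomial.coeff_X_pow, Polynomial.coeff_zero] at hc
  rw [Finset.sum_eq_single j] at hc
  · simpa using hc
  · intro k hk hkj
    have : (j+d).toNat ≠ (k+d).toNat := by
      have h1 := hdk k hk; have h2 := hdk j hj; omega
    simp [this]
  · intro hjs; exact absurd hj hjs

/-- A nonnegative continuous function with zero integral against a fully
supported finite measure vanishes identically. -/
lemma zero_of_integral_zero (μ : Measure Circle) [IsFiniteMeasure μ]
    (hsupp : ∀ U : Set Circle, IsOpen U → U.Nonempty → 0 < μ U)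
    (g : Circle → ℝ) (hg : Continuous g) (hnn : ∀ z, 0 ≤ g z)
    (hint : ∫ z, g z ∂μ = 0) : ∀ z, g z = 0 := by
  have hi : Integrable g μ :=
    hg.integrable_of_hasCompactSupport (HasCompactSupport.of_compactSpace g)
  have hae : g =ᵐ[μ] 0 :=
    (integral_eq_zero_iff_of_nonneg hnn hi).mp hint
  have hmeas : μ {z | g z ≠ 0} = 0 := by
    have := hae
    rwa [Filter.EventuallyEq, ae_iff] at this
  intro z
  by_contra hz
  have hopen : IsOpen {w : Circle | g w ≠ 0} := by
    have : {w : Circle | g w ≠ 0} = g ⁻¹' ({0}ᶜ) := rfl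
    rw [this]; exact hg.isOpen_preimage _ isOpen_compl_singleton
  have hpos := hsupp _ hopen ⟨z, hz⟩
  rw [hmeas] at hpos
  exact lt_irrefl _ hpos

set_option maxHeartbeats 1000000 in
/-- Let `μ` be a finite Borel measure on `𝕋` with full
topological support (every nonempty open set has positive measure).  If
`f : ℤ² → ℂ` is finitely supported and `∑_m μ̌(m)(f^⋆ *_{2α} f)(m,0) = 0`,
then `f = 0`: the state `ω_μ` is faithful when `supp(μ) = 𝕋`. -/
theorem faithfulness_of_state
    (α : ℝ) (μ : Measure Circle) [IsFiniteMeasure μ]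
    (hsupp : ∀ U : Set Circle, IsOpen U → U.Nonempty → 0 < μ U)
    (f : ℤ × ℤ → ℂ) (hf : (Function.support f).Finite)
    (hzero : ∑' m : ℤ, (∫ z : Circle, (z : ℂ) ^ m ∂μ) * twConv α (fStar f) f (m, 0) = 0) :
    f = 0 := by
  classical
  set S := hf.toFinset with hS
  set S1 := S.image Prod.fst with hS1
  set S2 := S.image Prod.snd with hS2
  set T : Finset ℤ := (S ×ˢ S).image (fun p => p.1.1 - p.2.1) with hT
  set g : ℤ × ℤ → ℤ → ℂ := fun s m =>
    (∫ z : Circle, (z : ℂ) ^ m ∂μ) *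
      (conj (f s) * f (m + s.1, s.2) * Complex.exp (2 * Real.pi * Complex.I * α * m * s.2))
    with hg
  set c : ℤ → ℤ → ℂ := fun k N => f (k, N) * Complex.exp (2 * Real.pi * Complex.I * α * k * N)
    with hc
  set P : ℤ → Circle → ℂ := fun N z => ∑ k ∈ S1, c k N * (z:ℂ)^k with hP
  have hmemS : ∀ a : ℤ × ℤ, f a ≠ 0 → a ∈ S := fun a ha => hf.mem_toFinset.mpr ha
  -- Step A : the twisted convolution as a finite sum
  have htw : ∀ m : ℤ, twConv α (fStar f) f (m, 0) = ∑ s ∈ S,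
      conj (f s) * f (m + s.1, s.2) * Complex.exp (2 * Real.pi * Complex.I * α * m * s.2) := by
    intro m
    unfold twConv
    rw [← (Equiv.neg (ℤ × ℤ)).tsum_eq]
    rw [tsum_eq_sum (s := S) ?_]
    · refine Finset.sum_congr rfl fun s hs => ?_
      have h1 : fStar f (Equiv.neg (ℤ × ℤ) s) = conj (f s) := by simp [fStar]
      have h2 : ((m, 0) : ℤ × ℤ) - (Equiv.neg (ℤ × ℤ) s) = (m + s.1, s.2) := by
        simp [Prod.ext_iff]
      rw [h1, h2]
      congr 1
      have h3 : (((Equiv.neg (ℤ × ℤ)) s).1 : ℂ) = -(s.1 : ℂ)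
          ∧ (((Equiv.neg (ℤ × ℤ)) s).2 : ℂ) = -(s.2 : ℂ) := by
        constructor <;> · simp
      rw [h3.1, h3.2]
      congr 1
      push_cast
      ring
    · intro s hs
      have : f s = 0 := by
        by_contra h
        exact hs (hf.mem_toFinset.mpr h)
      simp [fStar, this]
  -- Step B : hzero as a finite sum
  have hB : ∑ m ∈ T, (∫ z : Circle, (z : ℂ) ^ m ∂μ) * twConv α (fStar f) f (m, 0) = 0 := by
    rw [← hzero]
    refine (tsum_eq_sum fun m hm => ?_).symm
    rw [htw m, Finset.mul_sum]
    refine Finset.sum_eq_zero fun s hs => ?_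
    have hfz : f (m + s.1, s.2) = 0 := by
      by_contra h
      exact hm (Finset.mem_image.mpr ⟨((m + s.1, s.2), s),
        Finset.mem_product.mpr ⟨hmemS _ h, hs⟩, by simp⟩)
    simp [hfz]
  -- Step C : swap order of summation
  have hC : ∑ s ∈ S, ∑ m ∈ T, g s m = 0 := by
    rw [Finset.sum_comm, ← hB]
    refine Finset.sum_congr rfl fun m _ => ?_
    rw [htw m, Finset.mul_sum]
  -- Step D : reindex the inner sum
  have hD : ∀ s ∈ S, ∑ m ∈ T, g s m = ∑ k ∈ S1, g s (k - s.1) := by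
    intro s hs
    have hsupp1 : ∀ m ∉ T, g s m = 0 := by
      intro m hm
      have hfz : f (m + s.1, s.2) = 0 := by
        by_contra h
        exact hm (Finset.mem_image.mpr ⟨((m + s.1, s.2), s),
          Finset.mem_product.mpr ⟨hmemS _ h, hs⟩, by simp⟩)
      simp [hg, hfz]
    have hsupp2 : ∀ m ∉ S1.image (fun k => k - s.1), g s m = 0 := by
      intro m hm
      have hfz : f (m + s.1, s.2) = 0 := by
        by_contra h
        refine hm (Finset.mem_image.mpr ⟨m + s.1, ?_, by ring⟩)
        exact Finset.mem_image.mpr ⟨(m + s.1, s.2), hmemS _ h, rfl⟩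
      simp [hg, hfz]
    rw [← tsum_eq_sum (L := SummationFilter.unconditional ℤ) hsupp1, tsum_eq_sum hsupp2,
      Finset.sum_image (fun a _ b _ h => by omega)]
  have hE : ∑ s ∈ S, ∑ k ∈ S1, g s (k - s.1) = 0 := by
    rw [← hC]
    exact Finset.sum_congr rfl fun s hs => (hD s hs).symm
  -- Step E' : extend the outer sum to a product and swap
  have hE' : ∑ N ∈ S2, ∑ M ∈ S1, ∑ k ∈ S1, g (M, N) (k - M) = 0 := by
    have hsub : S ⊆ S1 ×ˢ S2 := fun s hsS => Finset.mem_product.mpr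
      ⟨Finset.mem_image.mpr ⟨s, hsS, rfl⟩, Finset.mem_image.mpr ⟨s, hsS, rfl⟩⟩
    have hext : ∑ s ∈ S, ∑ k ∈ S1, g s (k - s.1)
        = ∑ s ∈ S1 ×ˢ S2, ∑ k ∈ S1, g s (k - s.1) := by
      refine Finset.sum_subset hsub fun s _ hsS => Finset.sum_eq_zero fun k _ => ?_
      have hfz : f s = 0 := by
        by_contra h
        exact hsS (hmemS _ h)
      simp [hg, hfz]
    calc ∑ N ∈ S2, ∑ M ∈ S1, ∑ k ∈ S1, g (M, N) (k - M)
        = ∑ M ∈ S1, ∑ N ∈ S2, ∑ k ∈ S1, g (M, N) (k - M) := Finset.sum_comm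
      _ = ∑ s ∈ S1 ×ˢ S2, ∑ k ∈ S1, g s (k - s.1) := by
            rw [Finset.sum_product]
      _ = ∑ s ∈ S, ∑ k ∈ S1, g s (k - s.1) := hext.symm
      _ = 0 := hE
  -- Step F : pointwise identification with an integral
  have hzpowcont : ∀ j : ℤ, Continuous (fun z : Circle => (z:ℂ)^j) := fun j => by
    have h := continuous_zpow (G := Circle) j
    exact continuous_subtype_val.comp h
  have hintg : ∀ M N k : ℤ,
      Integrable (fun z : Circle => conj (c M N * (z:ℂ)^M) * (c k N * (z:ℂ)^k)) μ := by
    intro M N k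
    have hcont : Continuous (fun z : Circle => conj (c M N * (z:ℂ)^M) * (c k N * (z:ℂ)^k)) := by
      exact (continuous_star.comp (continuous_const.mul (hzpowcont M))).mul
        (continuous_const.mul (hzpowcont k))
    exact hcont.integrable_of_hasCompactSupport (HasCompactSupport.of_compactSpace _)
  have hF : ∀ M N k : ℤ, g (M, N) (k - M)
      = ∫ z : Circle, conj (c M N * (z:ℂ)^M) * (c k N * (z:ℂ)^k) ∂μ := by
    intro M N k
    rw [hg]
    simp only
    rw [← integral_mul_const]
    refine integral_congr_ae (Filter.Eventually.of_forall fun z => ?_)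
    have hz : (z:ℂ) ≠ 0 := z.coe_ne_zero
    have hzconj : conj ((z:ℂ)^M) = (z:ℂ)^(-M) := by
      rw [map_zpow₀, ← Circle.coe_inv_eq_conj, Circle.coe_inv, inv_zpow']
    have harg : conj ((2:ℂ) * Real.pi * Complex.I * α * M * N)
        = -(2 * Real.pi * Complex.I * α * M * N) := by
      simp only [map_mul, Complex.conj_I, Complex.conj_ofReal, map_ofNat, map_intCast]
      ring
    have hecon : Complex.exp (conj ((2:ℂ) * Real.pi * Complex.I * α * M * N))
        = conj (Complex.exp (2 * Real.pi * Complex.I * α * M * N)) := Complex.exp_conj _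
    have heconj : conj (Complex.exp (2 * Real.pi * Complex.I * α * M * N))
        = Complex.exp (-(2 * Real.pi * Complex.I * α * M * N)) := by
      rw [← hecon, harg]
    have hsub : (k - M : ℤ) + M = k := by omega
    rw [hsub]
    have hzsplit : (z:ℂ)^(k - M) = (z:ℂ)^k * (z:ℂ)^(-M) := by
      rw [← zpow_add₀ hz, Int.sub_eq_add_neg]
    have hesplit : Complex.exp (2 * Real.pi * Complex.I * α * ((k : ℂ) - (M : ℂ)) * N)
        = Complex.exp (2 * Real.pi * Complex.I * α * k * N)
          * Complex.exp (-(2 * Real.pi * Complex.I * α * M * N)) := by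
      rw [← Complex.exp_add]; congr 1; ring
    have hcast : ((k - M : ℤ) : ℂ) = (k : ℂ) - (M : ℂ) := by push_cast; ring
    rw [hc]
    simp only
    simp only [map_mul]
    rw [hzconj, heconj, hcast, hzsplit, hesplit]
    ring
  -- Step G : sum the integrals into a quadratic form
  have hG : ∀ N : ℤ, ∑ M ∈ S1, ∑ k ∈ S1,
      (∫ z : Circle, conj (c M N * (z:ℂ)^M) * (c k N * (z:ℂ)^k) ∂μ)
      = ∫ z : Circle, conj (P N z) * P N z ∂μ := by
    intro N
    have h1 : ∀ M ∈ S1, ∑ k ∈ S1,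
        (∫ z : Circle, conj (c M N * (z:ℂ)^M) * (c k N * (z:ℂ)^k) ∂μ)
        = ∫ z : Circle, ∑ k ∈ S1, conj (c M N * (z:ℂ)^M) * (c k N * (z:ℂ)^k) ∂μ := by
      intro M _
      exact (integral_finset_sum S1 fun k _ => hintg M N k).symm
    rw [Finset.sum_congr rfl h1,
      ← integral_finset_sum S1 (fun M _ => integrable_finset_sum S1 fun k _ => hintg M N k)]
    refine integral_congr_ae (Filter.Eventually.of_forall fun z => ?_)
    rw [hP]
    simp only
    rw [map_sum, Finset.sum_mul]
    refine Finset.sum_congr rfl fun M _ => ?_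
    rw [Finset.mul_sum]
  -- Step H : the quadratic form is a nonnegative real integral
  have hH : ∀ N : ℤ, (∫ z : Circle, conj (P N z) * P N z ∂μ)
      = ((∫ z : Circle, Complex.normSq (P N z) ∂μ : ℝ) : ℂ) := by
    intro N
    calc (∫ z : Circle, conj (P N z) * P N z ∂μ)
        = ∫ z : Circle, ((Complex.normSq (P N z) : ℝ) : ℂ) ∂μ :=
          integral_congr_ae (Filter.Eventually.of_forall fun z => by
            exact Complex.normSq_eq_conj_mul_self.symm)
      _ = ((∫ z : Circle, Complex.normSq (P N z) ∂μ : ℝ) : ℂ) := integral_ofReal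
  have hPcont : ∀ N : ℤ, Continuous (P N) := by
    intro N
    exact continuous_finset_sum S1 fun k _ => continuous_const.mul (hzpowcont k)
  -- Step I : each summand vanishes
  have hI : ∀ N ∈ S2, ∀ z : Circle, P N z = 0 := by
    have hsum : ∑ N ∈ S2, (∫ z : Circle, Complex.normSq (P N z) ∂μ) = 0 := by
      have := hE'
      rw [Finset.sum_congr rfl (fun N _ => Finset.sum_congr rfl fun M _ =>
        Finset.sum_congr rfl fun k _ => hF M N k)] at this
      rw [Finset.sum_congr rfl (fun N _ => hG N),
        Finset.sum_congr rfl (fun N _ => hH N)] at this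
      have hre := congrArg Complex.re this
      rw [Complex.re_sum] at hre
      simpa using hre
    have hnn : ∀ N ∈ S2, 0 ≤ ∫ z : Circle, Complex.normSq (P N z) ∂μ := fun N _ =>
      integral_nonneg fun z => Complex.normSq_nonneg _
    intro N hN
    have hNzero : ∫ z : Circle, Complex.normSq (P N z) ∂μ = 0 :=
      (Finset.sum_eq_zero_iff_of_nonneg hnn).mp hsum N hN
    have := zero_of_integral_zero μ hsupp (fun z => Complex.normSq (P N z))
      (Complex.continuous_normSq.comp (hPcont N)) (fun z => Complex.normSq_nonneg _) hNzero
    intro z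
    exact (Complex.normSq_eq_zero).mp (this z)
  -- Step J : conclude coefficientwise
  have hcoeff : ∀ N ∈ S2, ∀ k ∈ S1, c k N = 0 := by
    intro N hN
    exact laurent_coeff_zero (fun k => c k N) S1 (fun z => hI N hN z)
  funext a
  by_contra ha
  have haS : a ∈ S := hmemS a ha
  have h1 : a.1 ∈ S1 := Finset.mem_image.mpr ⟨a, haS, rfl⟩
  have h2 : a.2 ∈ S2 := Finset.mem_image.mpr ⟨a, haS, rfl⟩
  have := hcoeff a.2 h2 a.1 h1
  rw [hc] at this
  simp only at this
  rcases mul_eq_zero.mp this with h | h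
  · exact ha (by rwa [Prod.mk.eta] at h)
  · exact Complex.exp_ne_zero _ h
end

section
/- Let α ∈ ℝ, let R := R_α be the rotation by e^{2πiα} on 𝕋 with Haar probability measure m, and let h : 𝕋 → 𝕋 be a homeomorphism. Suppose the map f := h ∘ R² ∘ h⁻¹ is such that the pushforward measure m ∘ f⁻¹ is mutually absolutely continuous with m. Set μ := m ∘ h (i.e., μ(E) = m(h(E)), the pushforward of m under h⁻¹). Then for every n ∈ ℤ, the measures μ ∘ R^n and μ ∘ R^{−n} are mutually absolutely continuous. -/
open MeasureTheory

/-- Let `R^n` denote the `n`-th power of the rotation by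
`e^{2πiα}` on `𝕋` carrying the Haar probability measure `m`, let `h` be a
homeomorphism of `𝕋`, and suppose `f := h ∘ R² ∘ h⁻¹` is such that `m ∘ f⁻¹`
is mutually absolutely continuous with `m`.  Setting `μ := m ∘ h` (the
pushforward of `m` under `h⁻¹`), for every `n ∈ ℤ` the measures `μ ∘ Rⁿ` and
`μ ∘ R⁻ⁿ` are mutually absolutely continuous. -/
theorem rotation_quasi_invariance
    (α : ℝ) (m : Measure Circle) [IsProbabilityMeasure m]
    [m.IsMulLeftInvariant]
    (h : Circle ≃ₜ Circle)
    (Rn : ℤ → Circle → Circle)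
    (hRn : ∀ (n : ℤ) (z : Circle), Rn n z = Circle.exp (2 * Real.pi * α * n) * z)
    (f : Circle → Circle) (hfdef : ∀ z, f z = h (Rn 2 (h.symm z)))
    (hquasi : Measure.map f m ≪ m ∧ m ≪ Measure.map f m)
    (μ : Measure Circle) (hμ : μ = Measure.map h.symm m) :
    ∀ n : ℤ, Measure.map (Rn n) μ ≪ Measure.map (Rn (-n)) μ
      ∧ Measure.map (Rn (-n)) μ ≪ Measure.map (Rn n) μ := by
  obtain ⟨hf1, hf2⟩ := hquasi
  have hRnm : ∀ n : ℤ, Measurable (Rn n) := by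
    intro n
    have e : Rn n = fun z => Circle.exp (2 * Real.pi * α * n) * z := funext (hRn n)
    rw [e]
    exact (continuous_const.mul continuous_id).measurable
  have hcomp : ∀ (a b : ℤ) (z : Circle), Rn a (Rn b z) = Rn (a + b) z := by
    intro a b z
    rw [hRn, hRn, hRn, ← mul_assoc, ← Circle.exp_add]
    congr 1
    push_cast
    ring
  have hfm : Measurable f := by
    have e : f = fun z => h (Rn 2 (h.symm z)) := funext hfdef
    rw [e]
    exact h.continuous.measurable.comp ((hRnm 2).comp h.symm.continuous.measurable)
  have hgm : ∀ k : ℤ, Measurable fun z => h (Rn k (h.symm z)) := fun k =>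
    h.continuous.measurable.comp ((hRnm k).comp h.symm.continuous.measurable)
  -- inverse of f
  set finv : Circle → Circle := fun z => h (Rn (-2) (h.symm z)) with hfinv
  have hfinvm : Measurable finv := hgm (-2)
  have hR0 : ∀ z, Rn 0 z = z := by
    intro z; rw [hRn]; push_cast; simp
  have hfinvf : finv ∘ f = id := by
    funext z
    show h (Rn (-2) (h.symm (f z))) = z
    rw [hfdef, h.symm_apply_apply, hcomp]
    norm_num [hR0]
  have hinv1 : Measure.map finv m ≪ m := by
    have e : m.map finv ≪ (Measure.map f m).map finv := hf2.map hfinvm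
    calc Measure.map finv m ≪ (Measure.map f m).map finv := e
      _ = m := by rw [Measure.map_map hfinvm hfm, hfinvf, Measure.map_id]
  have hinv2 : m ≪ Measure.map finv m := by
    have e : (Measure.map f m).map finv ≪ m.map finv := hf1.map hfinvm
    calc m = (Measure.map f m).map finv := by
            rw [Measure.map_map hfinvm hfm, hfinvf, Measure.map_id]
      _ ≪ Measure.map finv m := e
  -- key: for all k, map (h ∘ Rn (2k) ∘ h.symm) m ~ m
  have key : ∀ k : ℤ, (Measure.map (fun z => h (Rn (2 * k) (h.symm z))) m ≪ m) ∧
      (m ≪ Measure.map (fun z => h (Rn (2 * k) (h.symm z))) m) := by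
    intro k
    induction k using Int.induction_on with
    | zero =>
      have e : (fun z => h (Rn (2 * 0) (h.symm z))) = id := by
        funext z
        simp only [mul_zero, id]
        have : Rn 0 (h.symm z) = h.symm z := by rw [hRn]; push_cast; simp
        rw [this, Homeomorph.apply_symm_apply]
      rw [e, Measure.map_id]
      exact ⟨Measure.AbsolutelyContinuous.rfl, Measure.AbsolutelyContinuous.rfl⟩
    | succ k ih =>
      have e : (fun z => h (Rn (2 * (k + 1)) (h.symm z)))
          = f ∘ fun z => h (Rn (2 * k) (h.symm z)) := by
        funext z
        simp only [Function.comp, hfdef, Homeomorph.symm_apply_apply, hcomp]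
        congr 1
        ring_nf
      rw [e, ← Measure.map_map hfm (hgm (2 * k))]
      exact ⟨(ih.1.map hfm).trans hf1, hf2.trans (ih.2.map hfm)⟩
    | pred k ih =>
      have e : (fun z => h (Rn (2 * (-(k : ℤ) - 1)) (h.symm z)))
          = finv ∘ fun z => h (Rn (2 * (-(k : ℤ))) (h.symm z)) := by
        funext z
        simp only [Function.comp, hfinv, Homeomorph.symm_apply_apply, hcomp]
        congr 1
        ring_nf
      rw [e, ← Measure.map_map hfinvm (hgm (2 * (-(k : ℤ))))]
      exact ⟨(ih.1.map hfinvm).trans hinv1, hinv2.trans (ih.2.map hfinvm)⟩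
  intro n
  have hmeas : Measurable (Rn (-n) ∘ h.symm) :=
    (hRnm (-n)).comp h.symm.continuous.measurable
  have heqn : ∀ z, Rn n (h.symm z) = (Rn (-n) ∘ h.symm) (h (Rn (2 * n) (h.symm z))) := by
    intro z
    simp only [Function.comp, Homeomorph.symm_apply_apply, hcomp]
    congr 1
    ring
  have e1 : Measure.map (Rn n) μ
      = ((Measure.map (fun z => h (Rn (2 * n) (h.symm z))) m).map (Rn (-n) ∘ h.symm)) := by
    rw [hμ, Measure.map_map (hRnm n) h.symm.continuous.measurable,
      Measure.map_map hmeas (hgm (2 * n))]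
    congr 1
    funext z
    exact heqn z
  have e2 : Measure.map (Rn (-n)) μ = m.map (Rn (-n) ∘ h.symm) := by
    rw [hμ, Measure.map_map (hRnm (-n)) h.symm.continuous.measurable]
  rw [e1, e2]
  exact ⟨(key n).1.map hmeas, (key n).2.map hmeas⟩
end
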